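/- For every d ≥ 1 and n ≥ 0, C_n^{(d)} = ∑_{k ≥ 0} P^{(d)}(n - kd), where P^{(d)}(m) is the number of partitions of m into at most d parts (and P^{(d)}(m) = 0 for m < 0); equivalently, ∑_{n≥0} C_n^{(d)} t^n = 1/((1-t^d) · (1-t)(1-t^2)···(1-t^d)) as formal power series. -/

import Mathlib

/-- The `i`-th standard basis vector of `ℤ^d`. -/
def stdBasis (d : ℕ) (i : Fin d) : Fin d → ℤ := fun j => if j = i then 1 else 0

/-- The set `X_d = { e(k) - e(i) - e(j) : i,j,k ∈ {1,…,d}, d ∣ k - i - j }`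
(indices written 1-based; here `Fin d` values represent `i+1` etc.). -/
def Xset (d : ℕ) : Set (Fin d → ℤ) :=
  { x | ∃ i j k : Fin d,
      (d : ℤ) ∣ (((k : ℕ) : ℤ) - ((i : ℕ) : ℤ) - ((j : ℕ) : ℤ) - 1) ∧
      x = stdBasis d k - stdBasis d i - stdBasis d j }

/-- Membership in `Λ_d = ℤ_{≥0}^d`. -/
def nonneg {d : ℕ} (v : Fin d → ℤ) : Prop := ∀ i, 0 ≤ v i

/-- The covering relation `v ⋖ w` on `Λ_d`: `v = w + x` for some `x ∈ X_d`. -/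
def covRel (d : ℕ) (v w : Fin d → ℤ) : Prop :=
  nonneg v ∧ nonneg w ∧ ∃ x ∈ Xset d, v = w + x

/-- The order `≺` on `Λ_d`: transitive closure of the covering relation. -/
def precR (d : ℕ) : (Fin d → ℤ) → (Fin d → ℤ) → Prop :=
  Relation.TransGen (covRel d)

/-- The principal ideal `I(v) = {v} ∪ {w : w ≺ v}`. -/
def idealG (d : ℕ) (v : Fin d → ℤ) : Set (Fin d → ℤ) := {v} ∪ { w | precR d w v }

/-- `n·e(1)` in `ℤ^d`. -/
def nE1 (d n : ℕ) : Fin d → ℤ := fun j => if (j : ℕ) = 0 then (n : ℤ) else 0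

/-- `C_n^{(d)} = |I(n·e(1))|`. -/
noncomputable def Cnum (d n : ℕ) : ℕ := (idealG d (nE1 d n)).ncard

/-- The congruence class `Λ_{d,k}` (with `k ∈ Fin d` representing `k+1 ∈ {1,…,d}`). -/
def Lclass (d : ℕ) (k : Fin d) : Set (Fin d → ℤ) :=
  { v | nonneg v ∧ (d : ℤ) ∣ ((∑ i : Fin d, ((i.val : ℤ) + 1) * v i) - (((k : ℕ) : ℤ) + 1)) }

/-- The number of partitions of `m` into at most `d` parts. -/
noncomputable def Ppart (d : ℕ) (m : ℤ) : ℕ :=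
  Set.ncard { v : Fin d → ℕ | (∀ i j : Fin d, i ≤ j → v j ≤ v i) ∧ (∑ i, (v i : ℤ)) = m }


/-! ### Auxiliary definitions -/

/-- Weighted sum `∑ (i+1) v_i`. -/
def Wt (d : ℕ) (v : Fin d → ℤ) : ℤ := ∑ i, ((i.val : ℤ) + 1) * v i

/-- The slice of `Λ_d` with weight `m`. -/
def Sset (d : ℕ) (m : ℤ) : Set (Fin d → ℤ) := {v | nonneg v ∧ Wt d v = m}

/-- ℕ-valued version of the slice. -/
def Nset (d : ℕ) (m : ℤ) : Set (Fin d → ℕ) :=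
  {u | ∑ i, ((i.val : ℤ) + 1) * (u i : ℤ) = m}

lemma Wt_add (d : ℕ) (v w : Fin d → ℤ) : Wt d (v + w) = Wt d v + Wt d w := by
  simp only [Wt, Pi.add_apply, mul_add, Finset.sum_add_distrib]

lemma Wt_sub (d : ℕ) (v w : Fin d → ℤ) : Wt d (v - w) = Wt d v - Wt d w := by
  simp only [Wt, Pi.sub_apply, mul_sub, Finset.sum_sub_distrib]

lemma Wt_basis (d : ℕ) (k : Fin d) : Wt d (stdBasis d k) = (k.val : ℤ) + 1 := by
  simp only [Wt, stdBasis]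
  rw [Finset.sum_eq_single k] <;> simp +contextual

lemma Wt_nE1 (d n : ℕ) (hd : 1 ≤ d) : Wt d (nE1 d n) = n := by
  simp only [Wt, nE1]
  rw [Finset.sum_eq_single (⟨0, hd⟩ : Fin d)] <;> simp +contextual [Fin.ext_iff]

lemma Wt_nonneg {d : ℕ} {v : Fin d → ℤ} (hv : nonneg v) : 0 ≤ Wt d v := by
  apply Finset.sum_nonneg
  intro i _
  have := hv i
  positivity

/-- Unweighted moment `∑ i v_i`. -/
def Mt (d : ℕ) (v : Fin d → ℤ) : ℤ := ∑ i, (i.val : ℤ) * v i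

lemma Mt_add (d : ℕ) (v w : Fin d → ℤ) : Mt d (v + w) = Mt d v + Mt d w := by
  simp only [Mt, Pi.add_apply, mul_add, Finset.sum_add_distrib]

lemma Mt_sub (d : ℕ) (v w : Fin d → ℤ) : Mt d (v - w) = Mt d v - Mt d w := by
  simp only [Mt, Pi.sub_apply, mul_sub, Finset.sum_sub_distrib]

lemma Mt_basis (d : ℕ) (k : Fin d) : Mt d (stdBasis d k) = (k.val : ℤ) := by
  simp only [Mt, stdBasis]
  rw [Finset.sum_eq_single k] <;> simp +contextual

lemma Mt_nonneg {d : ℕ} {v : Fin d → ℤ} (hv : nonneg v) : 0 ≤ Mt d v := by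
  apply Finset.sum_nonneg
  intro i _
  have := hv i
  positivity

lemma nonneg_nE1 (d n : ℕ) : nonneg (nE1 d n) := by
  intro i; unfold nE1; split <;> simp

lemma cov_wt {d : ℕ} {v w : Fin d → ℤ} (h : covRel d v w) :
    Wt d v = Wt d w ∨ Wt d v = Wt d w - d := by
  obtain ⟨hv, hw, x, ⟨i, j, k, hdvd, hx⟩, hvx⟩ := h
  have hd0 : 0 < d := i.pos
  have hWx : Wt d x = (k.val : ℤ) - i.val - j.val - 1 := by
    subst hx; rw [Wt_sub, Wt_sub, Wt_basis, Wt_basis, Wt_basis]; ring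
  obtain ⟨q, hq⟩ := hdvd
  have hki : (k.val : ℤ) < d := by exact_mod_cast k.isLt
  have hii : (i.val : ℤ) < d := by exact_mod_cast i.isLt
  have hji : (j.val : ℤ) < d := by exact_mod_cast j.isLt
  have hi0 : (0:ℤ) ≤ i.val := Int.natCast_nonneg _
  have hj0 : (0:ℤ) ≤ j.val := Int.natCast_nonneg _
  have hk0 : (0:ℤ) ≤ k.val := Int.natCast_nonneg _
  have hd0' : (0:ℤ) < d := by exact_mod_cast hd0
  have hql : q < 1 := by nlinarith
  have hqg : -2 < q := by nlinarith
  have hq01 : q = 0 ∨ q = -1 := by omega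
  have hWv : Wt d v = Wt d w + ((k.val : ℤ) - i.val - j.val - 1) := by
    rw [hvx, Wt_add, hWx]
  rcases hq01 with h1 | h1 <;> [left; right] <;> rw [hWv, hq, h1] <;> ring

lemma prec_bound {d : ℕ} {v u : Fin d → ℤ} (h : precR d v u) :
    nonneg v ∧ Wt d v ≤ Wt d u ∧ (d : ℤ) ∣ (Wt d u - Wt d v) := by
  have hd : (0:ℤ) ≤ d := Int.natCast_nonneg _
  induction h with
  | single h =>
    refine ⟨h.1, ?_, ?_⟩ <;> rcases cov_wt h with h' | h'
    · exact le_of_eq h'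
    · omega
    · rw [h']; simp
    · rw [h']; exact ⟨1, by ring⟩
  | tail _ h₂ ih =>
    obtain ⟨hnn, hle, q, hq⟩ := ih
    rcases cov_wt h₂ with h' | h'
    · exact ⟨hnn, by omega, ⟨q, by linear_combination hq - h'⟩⟩
    · exact ⟨hnn, by omega, ⟨q + 1, by linear_combination hq - h'⟩⟩

lemma mem_ideal_self (d : ℕ) (v : Fin d → ℤ) : v ∈ idealG d v := Or.inl rfl

lemma ideal_cov {d : ℕ} {x y z : Fin d → ℤ} (h : covRel d x y) (hy : y ∈ idealG d z) :
    x ∈ idealG d z := by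
  rcases hy with hy | hy
  · exact Or.inr (hy ▸ Relation.TransGen.single h)
  · exact Or.inr (Relation.TransGen.head h hy)

lemma ideal_trans {d : ℕ} {x y z : Fin d → ℤ} (hx : x ∈ idealG d y) (hy : y ∈ idealG d z) :
    x ∈ idealG d z := by
  rcases hx with hx | hx
  · exact hx ▸ hy
  · rcases hy with hy | hy
    · exact Or.inr (hy ▸ hx)
    · exact Or.inr (hx.trans hy)

lemma mergeUp {d : ℕ} (hd : 1 ≤ d) (m : ℕ) :
    ∀ (t : ℕ) (v : Fin d → ℤ), nonneg v → Wt d v = m →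
      Mt d v = t → v ∈ idealG d (nE1 d m) := by
  intro t
  induction t using Nat.strong_induction_on with
  | _ t ih =>
    intro v hv hW hmu
    by_cases hex : ∃ i : Fin d, i.val ≠ 0 ∧ 1 ≤ v i
    · obtain ⟨i, hi0, hvi⟩ := hex
      have hipos : 0 < i.val := Nat.pos_of_ne_zero hi0
      have hilt : i.val - 1 < d := by omega
      set i' : Fin d := ⟨i.val - 1, hilt⟩ with hi'
      set z : Fin d := ⟨0, hd⟩ with hz
      set w : Fin d → ℤ := v + stdBasis d i' + stdBasis d z - stdBasis d i with hwdef
      have hi'v : i'.val = i.val - 1 := rfl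
      have hzv : z.val = 0 := rfl
      have hiz : i ≠ z := by
        intro h
        exact hi0 ((congrArg Fin.val h).trans hzv)
      have hii' : i ≠ i' := by
        intro h
        have := (congrArg Fin.val h).trans hi'v
        omega
      have hwn : nonneg w := by
        intro j
        have hvj := hv j
        by_cases hji : j = i
        · subst hji
          simp only [hwdef, Pi.add_apply, Pi.sub_apply, stdBasis, if_neg hii',
            if_neg hiz, if_pos rfl]
          omega
        · simp only [hwdef, Pi.add_apply, Pi.sub_apply, stdBasis, if_neg hji]
          split_ifs <;> omega
      have hcast : ((i.val - 1 : ℕ) : ℤ) = (i.val : ℤ) - 1 := by omega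
      have hcov : covRel d v w := by
        refine ⟨hv, hwn, stdBasis d i - stdBasis d i' - stdBasis d z, ⟨i', z, i, ?_, rfl⟩, ?_⟩
        · have : ((i.val : ℕ) : ℤ) - ((i'.val : ℕ) : ℤ) - ((z.val : ℕ) : ℤ) - 1 = 0 := by
            rw [hi'v, hzv]; omega
          rw [this]
          exact dvd_zero _
        · rw [hwdef]; funext j; simp only [Pi.add_apply, Pi.sub_apply]; ring
      have hWw : Wt d w = m := by
        rw [hwdef, Wt_sub, Wt_add, Wt_add, Wt_basis, Wt_basis, Wt_basis, hW, hi'v, hzv]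
        omega
      have htpos : 1 ≤ Mt d v := by
        have hterm : (i.val : ℤ) * v i ≥ 1 := by
          have : (1:ℤ) ≤ i.val := by exact_mod_cast hipos
          nlinarith
        have hs := Finset.single_le_sum (f := fun b : Fin d => (b.val : ℤ) * v b)
          (fun b _ => by have := hv b; positivity) (Finset.mem_univ i)
        have hs' : (i.val : ℤ) * v i ≤ ∑ x : Fin d, (x.val : ℤ) * v x := by simpa using hs
        unfold Mt
        linarith
      have ht1 : 1 ≤ t := by
        rw [hmu] at htpos
        exact_mod_cast htpos
      have hmuw : Mt d w = ((t - 1 : ℕ) : ℤ) := by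
        rw [hwdef, Mt_sub, Mt_add, Mt_add, Mt_basis, Mt_basis, Mt_basis, hmu, hi'v, hzv]
        omega
      exact ideal_cov hcov (ih (t - 1) (by omega) w hwn hWw hmuw)
    · push_neg at hex
      have hv0 : ∀ i : Fin d, i.val ≠ 0 → v i = 0 := by
        intro i h
        have h1 := hex i h
        have h2 := hv i
        omega
      have hveq : v = nE1 d m := by
        funext j
        by_cases hj : j.val = 0
        · have hWv : Wt d v = v j := by
            unfold Wt
            rw [Finset.sum_eq_single j]
            · simp [hj]
            · intro b _ hb
              rw [hv0 b (fun hb0 => hb (Fin.ext (hb0.trans hj.symm)))]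
              ring
            · simp
          simp only [nE1, if_pos hj]
          rw [← hW, hWv]
        · simp [nE1, hj, hv0 j hj]
      rw [hveq]
      exact mem_ideal_self _ _

lemma dropD {d : ℕ} (hd : 1 ≤ d) {n : ℕ} (hn : d ≤ n) :
    nE1 d (n - d) ∈ idealG d (nE1 d n) := by
  have hlt : d - 1 < d := by omega
  set l : Fin d := ⟨d - 1, hlt⟩ with hl
  set z : Fin d := ⟨0, hd⟩ with hz
  set v : Fin d → ℤ := nE1 d (n - d) + stdBasis d l with hvdef
  have hvn : nonneg v := by
    intro j
    have h1 := nonneg_nE1 d (n - d) j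
    simp only [hvdef, Pi.add_apply, stdBasis]
    split_ifs <;> omega
  have hWv : Wt d v = n := by
    have hlv : l.val = d - 1 := rfl
    rw [hvdef, Wt_add, Wt_basis, Wt_nE1 d _ hd, hlv]
    omega
  have hvi : v ∈ idealG d (nE1 d n) :=
    mergeUp hd n (Mt d v).toNat v hvn hWv (Int.toNat_of_nonneg (Mt_nonneg hvn)).symm
  have hcov : covRel d (nE1 d (n - d)) v := by
    refine ⟨nonneg_nE1 _ _, hvn, stdBasis d z - stdBasis d l - stdBasis d z,
      ⟨l, z, z, ?_, rfl⟩, ?_⟩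
    · have : ((z.val : ℕ) : ℤ) - ((l.val : ℕ) : ℤ) - ((z.val : ℕ) : ℤ) - 1 = -d := by
        simp only [hl, hz]; omega
      rw [this]
      exact ⟨-1, by ring⟩
    · rw [hvdef]; funext j; simp only [Pi.add_apply, Pi.sub_apply]; ring
  exact ideal_cov hcov hvi

lemma chainDrop {d : ℕ} (hd : 1 ≤ d) (n : ℕ) :
    ∀ k : ℕ, k * d ≤ n → nE1 d (n - k * d) ∈ idealG d (nE1 d n) := by
  intro k
  induction k with
  | zero => intro _; simpa using mem_ideal_self d (nE1 d n)
  | succ k ihk =>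
    intro hkd
    have hexp : (k + 1) * d = k * d + d := by ring
    rw [hexp] at hkd
    have h1 : k * d ≤ n := by omega
    have h2 : d ≤ n - k * d := by omega
    have h3 : n - (k + 1) * d = (n - k * d) - d := by rw [hexp]; omega
    rw [h3]
    exact ideal_trans (dropD hd h2) (ihk h1)

lemma ideal_eq {d : ℕ} (hd : 1 ≤ d) (n : ℕ) :
    idealG d (nE1 d n) = ⋃ k ∈ Finset.range (n + 1), Sset d ((n : ℤ) - k * d) := by
  have hd0 : (0:ℤ) < d := by exact_mod_cast hd
  ext v
  simp only [Set.mem_iUnion, Finset.mem_range, exists_prop]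
  constructor
  · rintro (hv | hv)
    · refine ⟨0, by omega, ?_⟩
      rw [hv]
      exact ⟨nonneg_nE1 _ _, by rw [Wt_nE1 d n hd]; push_cast; ring⟩
    · obtain ⟨hnn, hle, q, hq⟩ := prec_bound hv
      rw [Wt_nE1 d n hd] at hle hq
      have hW0 : 0 ≤ Wt d v := Wt_nonneg hnn
      have hq0 : 0 ≤ q := by nlinarith
      refine ⟨q.toNat, ?_, hnn, ?_⟩
      · have hqd : q ≤ q * d := by nlinarith
        have : q ≤ (n:ℤ) := by nlinarith
        omega
      · have h1 : ((q.toNat : ℕ) : ℤ) = q := Int.toNat_of_nonneg hq0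
        rw [h1]
        linarith [hq]
  · rintro ⟨k, hk, hnn, hWv⟩
    by_cases hkd : k * d ≤ n
    · have hcast : ((n - k * d : ℕ) : ℤ) = (n : ℤ) - k * d := by push_cast; omega
      have hm : Wt d v = ((n - k * d : ℕ) : ℤ) := by rw [hcast, hWv]
      have h1 : v ∈ idealG d (nE1 d (n - k * d)) :=
        mergeUp hd _ (Mt d v).toNat v hnn hm (Int.toNat_of_nonneg (Mt_nonneg hnn)).symm
      exact ideal_trans h1 (chainDrop hd n k hkd)
    · exfalso
      have hW0 : 0 ≤ Wt d v := Wt_nonneg hnn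
      rw [hWv] at hW0
      have : ((k * d : ℕ) : ℤ) ≤ n := by push_cast; linarith
      exact hkd (by exact_mod_cast this)

lemma Nset_empty {d : ℕ} {m : ℤ} (hm : m < 0) : Nset d m = ∅ := by
  ext u
  simp only [Nset, Set.mem_setOf_eq, Set.mem_empty_iff_false, iff_false]
  intro h
  have : (0:ℤ) ≤ m := by
    rw [← h]; apply Finset.sum_nonneg; intro i _; positivity
  omega

lemma Nset_finite (d : ℕ) (m : ℤ) : (Nset d m).Finite := by
  rcases lt_or_ge m 0 with hm | hm
  · rw [Nset_empty hm]; exact Set.finite_empty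
  · apply Set.Finite.subset (Set.Finite.pi (t := fun _ : Fin d => Set.Iic m.toNat)
      (fun _ => Set.finite_Iic _))
    intro u hu
    simp only [Set.mem_pi, Set.mem_univ, Set.mem_Iic, forall_true_left]
    intro i
    have hterm : ((i.val : ℤ) + 1) * (u i : ℤ) ≤ m := by
      rw [← hu]
      exact Finset.single_le_sum (f := fun b : Fin d => ((b.val : ℤ) + 1) * (u b : ℤ))
        (fun b _ => by positivity) (Finset.mem_univ i)
    have hiv : (0:ℤ) ≤ (i.val : ℤ) := Int.natCast_nonneg _
    have huv : (0:ℤ) ≤ ((u i : ℕ) : ℤ) := Int.natCast_nonneg _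
    have h1 : ((u i : ℕ) : ℤ) ≤ m := by nlinarith
    omega

lemma bijOn_coe (d : ℕ) (m : ℤ) :
    Set.BijOn (fun (u : Fin d → ℕ) (i : Fin d) => (u i : ℤ)) (Nset d m) (Sset d m) := by
  refine ⟨?_, ?_, ?_⟩
  · intro u hu
    exact ⟨fun i => Int.natCast_nonneg _, hu⟩
  · intro u _ u' _ h
    funext i
    have h2 : ((u i : ℕ) : ℤ) = ((u' i : ℕ) : ℤ) := congrFun h i
    exact_mod_cast h2
  · intro v ⟨hnn, hW⟩
    refine ⟨fun i => (v i).toNat, ?_, ?_⟩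
    · show ∑ i, ((i.val : ℤ) + 1) * (((v i).toNat : ℕ) : ℤ) = m
      rw [← hW]
      apply Finset.sum_congr rfl
      intro i _
      rw [Int.toNat_of_nonneg (hnn i)]
    · funext i
      simp [Int.toNat_of_nonneg (hnn i)]

lemma ncard_Sset (d : ℕ) (m : ℤ) : (Sset d m).ncard = (Nset d m).ncard := by
  rw [← (bijOn_coe d m).image_eq]
  exact Set.ncard_image_of_injOn (bijOn_coe d m).injOn

lemma Sset_finite (d : ℕ) (m : ℤ) : (Sset d m).Finite := by
  rw [← (bijOn_coe d m).image_eq]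
  exact (Nset_finite d m).image _

/-- Tail sums. -/
def Tnat (d : ℕ) (u : Fin d → ℕ) (j : ℕ) : ℕ :=
  ∑ i ∈ Finset.univ.filter (fun i : Fin d => j ≤ i.val), u i

def psiP (d : ℕ) (u : Fin d → ℕ) : Fin d → ℕ := fun j => Tnat d u j.val

def deltaP (d : ℕ) (p : Fin d → ℕ) : Fin d → ℕ :=
  fun i => p i - (if h : i.val + 1 < d then p ⟨i.val + 1, h⟩ else 0)

lemma Tnat_ge {d : ℕ} (u : Fin d → ℕ) {j : ℕ} (hj : d ≤ j) : Tnat d u j = 0 := by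
  unfold Tnat
  rw [Finset.filter_false_of_mem, Finset.sum_empty]
  intro i _
  have := i.isLt
  omega

lemma Tnat_step {d : ℕ} (u : Fin d → ℕ) {j : ℕ} (hj : j < d) :
    Tnat d u j = u ⟨j, hj⟩ + Tnat d u (j + 1) := by
  unfold Tnat
  have hset : Finset.univ.filter (fun i : Fin d => j ≤ i.val)
      = insert ⟨j, hj⟩ (Finset.univ.filter (fun i : Fin d => j + 1 ≤ i.val)) := by
    ext i
    simp only [Finset.mem_filter, Finset.mem_insert, Finset.mem_univ, true_and, Fin.ext_iff]
    omega
  rw [hset, Finset.sum_insert (by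
    simp only [Finset.mem_filter, Finset.mem_univ, true_and]
    omega)]

lemma sum_psiP (d : ℕ) (u : Fin d → ℕ) :
    ∑ j : Fin d, psiP d u j = ∑ i : Fin d, (i.val + 1) * u i := by
  unfold psiP Tnat
  calc ∑ j : Fin d, ∑ i ∈ Finset.univ.filter (fun i : Fin d => j.val ≤ i.val), u i
      = ∑ j : Fin d, ∑ i : Fin d, if j.val ≤ i.val then u i else 0 := by
        apply Finset.sum_congr rfl
        intro j _
        rw [Finset.sum_filter]
    _ = ∑ i : Fin d, ∑ j : Fin d, if j.val ≤ i.val then u i else 0 := Finset.sum_comm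
    _ = ∑ i : Fin d, (i.val + 1) * u i := by
        apply Finset.sum_congr rfl
        intro i _
        rw [← Finset.sum_filter, Finset.sum_const]
        have hc : Finset.univ.filter (fun j : Fin d => j.val ≤ i.val) = Finset.Iic i := by
          ext j
          simp only [Finset.mem_filter, Finset.mem_univ, true_and, Finset.mem_Iic, Fin.le_def]
        rw [hc, Fin.card_Iic, smul_eq_mul]

lemma Tnat_deltaP {d : ℕ} (p : Fin d → ℕ) (hp : ∀ i j : Fin d, i ≤ j → p j ≤ p i) :
    ∀ t j, j + t = d → Tnat d (deltaP d p) j = if h : j < d then p ⟨j, h⟩ else 0 := by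
  intro t
  induction t with
  | zero =>
    intro j hj
    rw [Tnat_ge _ (by omega), dif_neg (by omega)]
  | succ t iht =>
    intro j hj
    have hjd : j < d := by omega
    rw [Tnat_step _ hjd, iht (j + 1) (by omega), dif_pos hjd]
    have hval : (⟨j, hjd⟩ : Fin d).val = j := rfl
    simp only [deltaP, hval]
    by_cases h1 : j + 1 < d
    · rw [dif_pos h1]
      have hle : p ⟨j + 1, h1⟩ ≤ p ⟨j, hjd⟩ := hp _ _ (by simp [Fin.le_def])
      exact Nat.sub_add_cancel hle
    · rw [dif_neg h1]
      simp

lemma bijOn_psiP (d : ℕ) (m : ℤ) :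
    Set.BijOn (psiP d) (Nset d m)
      { v : Fin d → ℕ | (∀ i j : Fin d, i ≤ j → v j ≤ v i) ∧ (∑ i, (v i : ℤ)) = m } := by
  refine ⟨?_, ?_, ?_⟩
  · intro u hu
    constructor
    · intro i j hij
      show Tnat d u j.val ≤ Tnat d u i.val
      unfold Tnat
      apply Finset.sum_le_sum_of_subset
      intro x hx
      simp only [Finset.mem_filter, Finset.mem_univ, true_and] at hx ⊢
      have : i.val ≤ j.val := hij
      omega
    · have h1 := congrArg (fun x : ℕ => (x : ℤ)) (sum_psiP d u)
      push_cast at h1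
      rw [h1]
      exact hu
  · intro u hu u' hu' h
    have hT : ∀ j : ℕ, Tnat d u j = Tnat d u' j := by
      intro j
      rcases lt_or_ge j d with hj | hj
      · exact congrFun h ⟨j, hj⟩
      · rw [Tnat_ge _ hj, Tnat_ge _ hj]
    funext i
    have h1 : Tnat d u i.val = u i + Tnat d u (i.val + 1) := by
      have := Tnat_step u i.isLt
      simpa using this
    have h1' : Tnat d u' i.val = u' i + Tnat d u' (i.val + 1) := by
      have := Tnat_step u' i.isLt
      simpa using this
    have h2 := hT i.val
    have h3 := hT (i.val + 1)
    omega
  · rintro p ⟨hmono, hsum⟩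
    have hψ : psiP d (deltaP d p) = p := by
      funext j
      have h1 := Tnat_deltaP p hmono (d - j.val) j.val (by omega)
      show Tnat d (deltaP d p) j.val = p j
      rw [h1, dif_pos j.isLt]
    refine ⟨deltaP d p, ?_, hψ⟩
    show ∑ i, ((i.val : ℤ) + 1) * ((deltaP d p) i : ℤ) = m
    have h1 := congrArg (fun x : ℕ => (x : ℤ)) (sum_psiP d (deltaP d p))
    push_cast at h1
    rw [← h1, hψ]
    exact hsum

lemma ncard_Nset_eq_Ppart (d : ℕ) (m : ℤ) : (Nset d m).ncard = Ppart d m := by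
  unfold Ppart
  rw [← (bijOn_psiP d m).image_eq, Set.ncard_image_of_injOn (bijOn_psiP d m).injOn]

lemma Ppart_neg {d : ℕ} {m : ℤ} (hm : m < 0) : Ppart d m = 0 := by
  rw [← ncard_Nset_eq_Ppart, Nset_empty hm, Set.ncard_empty]

lemma ncard_biUnion_range {α : Type*} (N : ℕ) (S : ℕ → Set α)
    (hfin : ∀ k, (S k).Finite)
    (hdisj : ∀ k l, k ≠ l → Disjoint (S k) (S l)) :
    (⋃ k ∈ Finset.range N, S k).ncard = ∑ k ∈ Finset.range N, (S k).ncard := by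
  induction N with
  | zero => simp
  | succ N ihN =>
    rw [Finset.range_add_one, Finset.set_biUnion_insert, Finset.sum_insert (by simp)]
    have h2 : (⋃ x ∈ Finset.range N, S x).Finite :=
      Set.Finite.biUnion (Finset.range N).finite_toSet (fun k _ => hfin k)
    have h1 : Disjoint (S N) (⋃ x ∈ Finset.range N, S x) := by
      simp only [Set.disjoint_iUnion_right]
      intro k hk
      exact hdisj N k (by simp at hk; omega)
    rw [Set.ncard_union_eq h1 (hfin N) h2, ihN]

lemma part1 {d : ℕ} (hd : 1 ≤ d) (n : ℕ) :
    Cnum d n = ∑ k ∈ Finset.range (n + 1), Ppart d ((n : ℤ) - k * d) := by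
  have hd0 : (0:ℤ) < d := by exact_mod_cast hd
  unfold Cnum
  rw [ideal_eq hd n]
  rw [ncard_biUnion_range (n+1) (fun k => Sset d ((n : ℤ) - k * d))
    (fun k => Sset_finite d _) ?_]
  · apply Finset.sum_congr rfl
    intro k _
    rw [ncard_Sset, ncard_Nset_eq_Ppart]
  · intro k l hkl
    rw [Set.disjoint_left]
    rintro v ⟨_, h1⟩ ⟨_, h2⟩
    rw [h1] at h2
    have : (k : ℤ) * d = l * d := by linarith
    have : (k : ℤ) = l := mul_right_cancel₀ (by positivity) this
    exact hkl (by exact_mod_cast this)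

lemma Nset_rec (d : ℕ) (n : ℕ) :
    (Nset (d+1) (n : ℤ)).ncard
      = ∑ k ∈ Finset.range (n + 1), (Nset d ((n : ℤ) - k * (d+1))).ncard := by
  set S : ℕ → Set (Fin (d+1) → ℕ) :=
    fun k => {u | u (Fin.last d) = k ∧ u ∈ Nset (d+1) (n : ℤ)} with hS
  have hcover : Nset (d+1) (n : ℤ) = ⋃ k ∈ Finset.range (n + 1), S k := by
    ext u
    simp only [hS, Set.mem_iUnion, Finset.mem_range, exists_prop, Set.mem_setOf_eq]
    constructor
    · intro hu
      refine ⟨u (Fin.last d), ?_, rfl, hu⟩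
      have hterm : (((Fin.last d).val : ℤ) + 1) * (u (Fin.last d) : ℤ) ≤ n := by
        rw [← hu]
        exact Finset.single_le_sum (f := fun b : Fin (d+1) => ((b.val : ℤ) + 1) * (u b : ℤ))
          (fun b _ => by positivity) (Finset.mem_univ _)
      have hdl : ((Fin.last d).val : ℤ) = d := by rw [Fin.val_last]
      rw [hdl] at hterm
      have h0 : (0:ℤ) ≤ (d:ℤ) := Int.natCast_nonneg _
      have h1 : ((u (Fin.last d) : ℕ) : ℤ) ≤ n := by nlinarith [Int.natCast_nonneg (u (Fin.last d))]
      omega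
    · rintro ⟨k, _, _, hu⟩
      exact hu
  have hSk : ∀ k : ℕ, (S k).ncard = (Nset d ((n : ℤ) - k * (d+1))).ncard := by
    intro k
    have hbij : Set.BijOn (fun u : Fin (d+1) → ℕ => Fin.init u) (S k)
        (Nset d ((n : ℤ) - k * (d+1))) := by
      refine ⟨?_, ?_, ?_⟩
      · rintro u ⟨hlast, hsum⟩
        show ∑ i : Fin d, ((i.val : ℤ) + 1) * ((Fin.init u) i : ℤ) = (n : ℤ) - k * (d+1)
        have hexp : ∑ i : Fin (d+1), ((i.val : ℤ) + 1) * (u i : ℤ)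
            = (∑ i : Fin d, ((i.val : ℤ) + 1) * (u i.castSucc : ℤ))
              + ((d : ℤ) + 1) * (u (Fin.last d) : ℤ) := by
          rw [Fin.sum_univ_castSucc]
          simp [Fin.val_last, Fin.coe_castSucc]
        rw [hsum, hlast] at hexp
        have : ∑ i : Fin d, ((i.val : ℤ) + 1) * ((Fin.init u) i : ℤ)
            = ∑ i : Fin d, ((i.val : ℤ) + 1) * (u i.castSucc : ℤ) := rfl
        rw [this]
        push_cast at hexp ⊢
        linarith
      · intro u hu u' hu' h
        funext i
        induction i using Fin.lastCases with
        | last => rw [hu.1, hu'.1]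
        | cast i => exact congrFun h i
      · intro w hw
        refine ⟨Fin.snoc w k, ⟨?_, ?_⟩, ?_⟩
        · rw [Fin.snoc_last]
        · show ∑ i : Fin (d+1), ((i.val : ℤ) + 1) * ((Fin.snoc w k : Fin (d+1) → ℕ) i : ℤ) = (n : ℤ)
          rw [Fin.sum_univ_castSucc]
          simp only [Fin.snoc_castSucc, Fin.snoc_last, Fin.val_last, Fin.coe_castSucc]
          rw [hw]
          push_cast
          ring
        · exact Fin.init_snoc (α := fun _ : Fin (d+1) => ℕ) k w
    rw [← hbij.image_eq, Set.ncard_image_of_injOn hbij.injOn]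
  rw [hcover, ncard_biUnion_range (n+1) S
    (fun k => (Nset_finite (d+1) (n : ℤ)).subset (fun u hu => hu.2))
    (fun k l hkl => Set.disjoint_left.mpr (fun u hu hu' => hkl (hu.1.symm.trans hu'.1)))]
  exact Finset.sum_congr rfl (fun k _ => hSk k)

lemma Nset_zero (m : ℤ) : (Nset 0 m).ncard = if m = 0 then 1 else 0 := by
  by_cases hm : m = 0
  · rw [if_pos hm]
    have h1 : Nset 0 m = Set.univ := by
      ext u
      simp [Nset, hm]
    rw [h1, Set.ncard_univ]
    exact Nat.card_unique
  · rw [if_neg hm]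
    have h1 : Nset 0 m = ∅ := by
      ext u
      simp only [Nset, Set.mem_setOf_eq, Set.mem_empty_iff_false, iff_false, Finset.univ_eq_empty,
        Finset.sum_empty]
      exact fun h => hm h.symm
    rw [h1, Set.ncard_empty]

open PowerSeries in
lemma genLemma (e : ℕ) (he : 1 ≤ e) (f : ℤ → ℕ) (hf : ∀ m : ℤ, m < 0 → f m = 0)
    (g : ℕ → ℕ) (hg : ∀ n : ℕ, g n = ∑ k ∈ Finset.range (n + 1), f ((n : ℤ) - k * e)) :
    PowerSeries.mk (fun n => (g n : ℚ)) * (1 - (X : ℚ⟦X⟧) ^ e)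
      = PowerSeries.mk (fun n => (f n : ℚ)) := by
  have hkey : ∀ n : ℕ, g n = f (n : ℤ) + (if e ≤ n then g (n - e) else 0) := by
    intro n
    rw [hg n, Finset.sum_range_succ']
    by_cases hen : e ≤ n
    · rw [if_pos hen, hg (n - e)]
      have hstep1 : ∑ k ∈ Finset.range (n - e + 1), f ((n : ℤ) - ((k + 1 : ℕ) : ℤ) * e)
          = ∑ k ∈ Finset.range n, f ((n : ℤ) - ((k + 1 : ℕ) : ℤ) * e) := by
        apply Finset.sum_subset (Finset.range_subset_range.mpr (by omega))
        intro k hk hk'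
        simp only [Finset.mem_range] at hk hk'
        apply hf
        have hke : k ≤ k * e := Nat.le_mul_of_pos_right k (by omega)
        have hprod : (k + 1) * e = k * e + e := by ring
        have hlt : n < (k + 1) * e := by omega
        have hlt' : (n : ℤ) < ((k + 1 : ℕ) : ℤ) * e := by exact_mod_cast hlt
        linarith
      have hstep2 : ∑ k ∈ Finset.range (n - e + 1), f ((n : ℤ) - ((k + 1 : ℕ) : ℤ) * e)
          = ∑ k ∈ Finset.range (n - e + 1), f (((n - e : ℕ) : ℤ) - (k : ℤ) * e) := by
        apply Finset.sum_congr rfl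
        intro k _
        congr 1
        have : ((n - e : ℕ) : ℤ) = (n : ℤ) - e := by omega
        rw [this]
        push_cast
        ring
      rw [← hstep1, hstep2]
      have h0 : (n : ℤ) - ((0 : ℕ) : ℤ) * e = (n : ℤ) := by push_cast; ring
      rw [h0]
      ring
    · rw [if_neg hen]
      have hz : ∑ k ∈ Finset.range n, f ((n : ℤ) - ((k + 1 : ℕ) : ℤ) * e) = 0 := by
        apply Finset.sum_eq_zero
        intro k hk
        apply hf
        have hlt : n < (k + 1) * e := by
          have : e ≤ (k + 1) * e := Nat.le_mul_of_pos_left e (by omega)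
          omega
        have hlt' : (n : ℤ) < ((k + 1 : ℕ) : ℤ) * e := by exact_mod_cast hlt
        linarith
      rw [hz]
      have h0 : (n : ℤ) - ((0 : ℕ) : ℤ) * e = (n : ℤ) := by push_cast; ring
      rw [h0]
      ring
  apply PowerSeries.ext
  intro n
  rw [mul_sub, mul_one, map_sub, PowerSeries.coeff_mul_X_pow']
  simp only [PowerSeries.coeff_mk]
  have hk := hkey n
  by_cases hen : e ≤ n
  · rw [if_pos hen] at hk ⊢
    rw [hk]
    push_cast
    ring
  · rw [if_neg hen] at hk ⊢
    rw [hk]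
    push_cast
    ring

open PowerSeries in
lemma Fd_eq (d : ℕ) :
    PowerSeries.mk (fun n : ℕ => ((Nset d (n : ℤ)).ncard : ℚ))
      = ∏ i ∈ Finset.range d, (1 - (X : ℚ⟦X⟧) ^ (i + 1))⁻¹ := by
  induction d with
  | zero =>
    simp only [Finset.range_zero, Finset.prod_empty]
    apply PowerSeries.ext
    intro n
    rw [PowerSeries.coeff_mk, PowerSeries.coeff_one]
    by_cases h : n = 0 <;> simp [Nset_zero, h]
  | succ d ihd =>
    have hrec : PowerSeries.mk (fun n : ℕ => ((Nset (d+1) (n : ℤ)).ncard : ℚ))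
          * (1 - (X : ℚ⟦X⟧) ^ (d+1))
        = PowerSeries.mk (fun n : ℕ => ((Nset d (n : ℤ)).ncard : ℚ)) :=
      genLemma (d+1) (by omega) (fun m => (Nset d m).ncard)
        (fun m hm => by show (Nset d m).ncard = 0; rw [Nset_empty hm, Set.ncard_empty])
        (fun n => (Nset (d+1) (n : ℤ)).ncard) (fun n => Nset_rec d n)
    rw [ihd] at hrec
    have hc : PowerSeries.constantCoeff (1 - (X : ℚ⟦X⟧) ^ (d+1)) ≠ 0 := by
      rw [map_sub, map_one, map_pow, PowerSeries.constantCoeff_X, zero_pow (by omega : d + 1 ≠ 0),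
        sub_zero]
      exact one_ne_zero
    have hunit : (1 - (X : ℚ⟦X⟧) ^ (d+1)) * (1 - (X : ℚ⟦X⟧) ^ (d+1))⁻¹ = 1 :=
      PowerSeries.mul_inv_cancel _ hc
    rw [Finset.prod_range_succ]
    calc PowerSeries.mk (fun n : ℕ => ((Nset (d+1) (n : ℤ)).ncard : ℚ))
        = PowerSeries.mk (fun n : ℕ => ((Nset (d+1) (n : ℤ)).ncard : ℚ))
            * ((1 - (X : ℚ⟦X⟧) ^ (d+1)) * (1 - (X : ℚ⟦X⟧) ^ (d+1))⁻¹) := by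
          rw [hunit, mul_one]
      _ = (PowerSeries.mk (fun n : ℕ => ((Nset (d+1) (n : ℤ)).ncard : ℚ))
            * (1 - (X : ℚ⟦X⟧) ^ (d+1))) * (1 - (X : ℚ⟦X⟧) ^ (d+1))⁻¹ := by
          ring
      _ = (∏ i ∈ Finset.range d, (1 - (X : ℚ⟦X⟧) ^ (i + 1))⁻¹)
            * (1 - (X : ℚ⟦X⟧) ^ (d+1))⁻¹ := by
          rw [hrec]

open PowerSeries in
theorem stmt19 (d : ℕ) (hd : 1 ≤ d) :
    (∀ n : ℕ, Cnum d n = ∑ k ∈ Finset.range (n + 1), Ppart d ((n : ℤ) - k * d)) ∧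
    (PowerSeries.mk (fun n => (Cnum d n : ℚ)) =
      (1 - (X : ℚ⟦X⟧) ^ d)⁻¹ * ∏ i ∈ Finset.range d, (1 - (X : ℚ⟦X⟧) ^ (i + 1))⁻¹) := by
  refine ⟨fun n => part1 hd n, ?_⟩
  have h1 : PowerSeries.mk (fun n : ℕ => (Cnum d n : ℚ)) * (1 - (X : ℚ⟦X⟧) ^ d)
      = PowerSeries.mk (fun n : ℕ => ((Ppart d (n : ℤ)) : ℚ)) :=
    genLemma d hd (fun m => Ppart d m) (fun m hm => Ppart_neg hm)
      (fun n => Cnum d n) (fun n => part1 hd n)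
  have h2 : PowerSeries.mk (fun n : ℕ => ((Ppart d (n : ℤ)) : ℚ))
      = PowerSeries.mk (fun n : ℕ => ((Nset d (n : ℤ)).ncard : ℚ)) :=
    congrArg PowerSeries.mk (funext (fun n => by rw [ncard_Nset_eq_Ppart]))
  rw [h2, Fd_eq d] at h1
  have hc : PowerSeries.constantCoeff (1 - (X : ℚ⟦X⟧) ^ d) ≠ 0 := by
    rw [map_sub, map_one, map_pow, PowerSeries.constantCoeff_X, zero_pow (by omega : d ≠ 0),
      sub_zero]
    exact one_ne_zero
  have hunit : (1 - (X : ℚ⟦X⟧) ^ d) * (1 - (X : ℚ⟦X⟧) ^ d)⁻¹ = 1 :=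
    PowerSeries.mul_inv_cancel _ hc
  calc PowerSeries.mk (fun n : ℕ => (Cnum d n : ℚ))
      = PowerSeries.mk (fun n : ℕ => (Cnum d n : ℚ))
          * ((1 - (X : ℚ⟦X⟧) ^ d) * (1 - (X : ℚ⟦X⟧) ^ d)⁻¹) := by
        rw [hunit, mul_one]
    _ = (PowerSeries.mk (fun n : ℕ => (Cnum d n : ℚ)) * (1 - (X : ℚ⟦X⟧) ^ d))
          * (1 - (X : ℚ⟦X⟧) ^ d)⁻¹ := by
        ring
    _ = (∏ i ∈ Finset.range d, (1 - (X : ℚ⟦X⟧) ^ (i + 1))⁻¹) * (1 - (X : ℚ⟦X⟧) ^ d)⁻¹ := by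
        rw [h1]
    _ = (1 - (X : ℚ⟦X⟧) ^ d)⁻¹ * ∏ i ∈ Finset.range d, (1 - (X : ℚ⟦X⟧) ^ (i + 1))⁻¹ :=
        mul_comm _ _
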